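/- Let 0 < a < 1 and let x₀ ∈ (a,1) satisfy F_a(x₀) < min{0, (1−2a)/12} (i.e. F_a(x₀) < min{F_a(0), F_a(1)}). Then the solution of x″ = x(x−1)(x−a) with initial conditions x(0) = x₀, x′(0) = 0 is a nonconstant periodic solution (its orbit is a closed cycle around the equilibrium (a,0)). -/

import Mathlib

open Filter Set

noncomputable section

/-- The potential `F_a(x) = -x⁴/4 + (1+a)x³/3 - a x²/2`. -/
def Fa (a x : ℝ) : ℝ := -x ^ 4 / 4 + (1 + a) * x ^ 3 / 3 - a * x ^ 2 / 2

/-- `x` is a (C²) solution of the autonomous equation `x'' = x(x-1)(x-a)`,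
with derivative `dx`. -/
def IsAutSol (a : ℝ) (x dx : ℝ → ℝ) : Prop :=
  (∀ t : ℝ, HasDerivAt x (dx t) t) ∧
  (∀ t : ℝ, HasDerivAt dx (x t * (x t - 1) * (x t - a)) t)


open Topology


variable {E : Type*} [NormedAddCommGroup E] [NormedSpace ℝ E] [CompleteSpace E]

lemma pl_existence {F : E → E} {L : NNReal} {C : ℝ} (hL : LipschitzWith L F)
    (hC : ∀ p, ‖F p‖ ≤ C) (p₀ : E) (n : ℕ) :
    ∃ f : ℝ → E, f 0 = p₀ ∧ ∀ t ∈ Ioo (-(n+1) : ℝ) (n+1), HasDerivAt f (F (f t)) t := by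
  have hC0 : 0 ≤ C := le_trans (norm_nonneg _) (hC p₀)
  have hpl : IsPicardLindelof (fun _ => F) (tmin := -((n:ℝ)+1)) (tmax := (n:ℝ)+1)
      ⟨0, by constructor <;> linarith [n.cast_nonneg (α := ℝ)]⟩ p₀
      ⟨C * ((n:ℝ)+1), by positivity⟩ 0 ⟨C, hC0⟩ L :=
    IsPicardLindelof.of_time_independent (fun p _ => hC p) hL.lipschitzOnWith (by
      show C * max ((n:ℝ)+1 - 0) (0 - -((n:ℝ)+1)) ≤ C * ((n:ℝ)+1) - 0
      rw [sub_zero, zero_sub, neg_neg, max_self, sub_zero])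
  obtain ⟨f, hf0, hf⟩ := hpl.exists_eq_forall_mem_Icc_hasDerivWithinAt₀
  exact ⟨f, hf0, fun t ht =>
    (hf t (Ioo_subset_Icc_self ht)).hasDerivAt (Icc_mem_nhds ht.1 ht.2)⟩

lemma global_existence {F : E → E} (hF : ContDiff ℝ 1 F) (hsupp : HasCompactSupport F)
    (p₀ : E) : ∃ γ : ℝ → E, γ 0 = p₀ ∧ ∀ t, HasDerivAt γ (F (γ t)) t := by
  obtain ⟨L, hL⟩ := ContDiff.lipschitzWith_of_hasCompactSupport hsupp hF one_ne_zero
  obtain ⟨C, hC⟩ := hsupp.exists_bound_of_continuous hF.continuous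
  choose f hf0 hf using fun n : ℕ => pl_existence hL hC p₀ n
  -- agreement of two local solutions
  have agree : ∀ (m n : ℕ) (t : ℝ), |t| < m + 1 → |t| < n + 1 → f m t = f n t := by
    intro m n t hm hn
    rcases eq_or_ne t 0 with rfl | _
    · rw [hf0 m, hf0 n]
    set b := min ((m:ℝ) + 1) ((n:ℝ) + 1) with hb
    have hbm : b ≤ (m:ℝ) + 1 := min_le_left _ _
    have hbn : b ≤ (n:ℝ) + 1 := min_le_right _ _
    have htb : |t| < b := lt_min hm hn
    have h0 : (0 : ℝ) ∈ Ioo (-b) b := by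
      constructor <;> nlinarith [abs_nonneg t]
    have key := ODE_solution_unique_of_mem_Ioo (v := fun _ => F) (s := fun _ => univ)
      (fun _ _ => hL.lipschitzOnWith) (t₀ := 0) (a := -b) (b := b) h0
      (f := f m) (g := f n) ?_ ?_ (by rw [hf0 m, hf0 n])
    · exact key ⟨by linarith [neg_abs_le t], by linarith [le_abs_self t]⟩
    · intro s hs
      exact ⟨hf m s ⟨by linarith [hs.1], by linarith [hs.2]⟩, trivial⟩
    · intro s hs
      exact ⟨hf n s ⟨by linarith [hs.1], by linarith [hs.2]⟩, trivial⟩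
  refine ⟨fun t => f ⌊|t|⌋₊ t, by simpa using hf0 0, fun t => ?_⟩
  set n := ⌊|t|⌋₊ with hn
  have htn : |t| < n + 1 := by exact_mod_cast Nat.lt_floor_add_one |t|
  have hder : HasDerivAt (f n) (F (f n t)) t := by
    apply hf n t
    constructor
    · linarith [neg_abs_le t]
    · linarith [le_abs_self t]
  have heq : (fun s => f ⌊|s|⌋₊ s) =ᶠ[nhds t] f n := by
    have hopen : Ioo (-((n:ℝ)+1)) ((n:ℝ)+1) ∈ nhds t :=
      Ioo_mem_nhds (by linarith [neg_abs_le t]) (by linarith [le_abs_self t])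
    filter_upwards [hopen] with s hs
    have hs' : |s| < n + 1 := abs_lt.mpr ⟨by linarith [hs.1], hs.2⟩
    exact agree ⌊|s|⌋₊ n s (by exact_mod_cast Nat.lt_floor_add_one |s|) hs'
  exact hder.congr_of_eventuallyEq heq


def gg (a x : ℝ) : ℝ := x * (x - 1) * (x - a)

lemma hasDerivAt_Fa (a y : ℝ) : HasDerivAt (Fa a) (y * (1 - y) * (y - a)) y := by
  have h : HasDerivAt (fun z : ℝ => -z ^ 4 / 4 + (1 + a) * z ^ 3 / 3 - a * z ^ 2 / 2)
      (-((4:ℕ) * y ^ 3) / 4 + (1 + a) * ((3:ℕ) * y ^ 2) / 3 - a * ((2:ℕ) * y ^ 1) / 2) y := by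
    exact (((hasDerivAt_pow 4 y).neg.div_const 4).add
      (((hasDerivAt_pow 3 y).const_mul (1 + a)).div_const 3)).sub
      (((hasDerivAt_pow 2 y).const_mul a).div_const 2)
  have he : Fa a = fun z : ℝ => -z ^ 4 / 4 + (1 + a) * z ^ 3 / 3 - a * z ^ 2 / 2 := rfl
  rw [he]; convert h using 1; push_cast; ring

def vf (a : ℝ) (p : ℝ × ℝ) : ℝ × ℝ := (p.2, gg a p.1)

def bump2 : ContDiffBump (0 : ℝ × ℝ) := ⟨2, 3, by norm_num, by norm_num⟩

def wf (a : ℝ) (p : ℝ × ℝ) : ℝ × ℝ := bump2 p • vf a p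

lemma contDiff_vf (a : ℝ) : ContDiff ℝ 1 (vf a) := by
  unfold vf gg; fun_prop

lemma contDiff_wf (a : ℝ) : ContDiff ℝ 1 (wf a) := by
  exact (bump2.contDiff (n := 1)).smul (contDiff_vf a)

lemma hsupp_wf (a : ℝ) : HasCompactSupport (wf a) := by
  apply bump2.hasCompactSupport.mono
  intro p hp
  simp only [Function.mem_support, ne_eq] at hp ⊢
  intro hb
  exact hp (by simp [wf, hb])

lemma wf_eq (a : ℝ) {p : ℝ × ℝ} (hp : ‖p‖ ≤ 2) : wf a p = (p.2, gg a p.1) := by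
  have h1 : bump2 p = 1 := bump2.one_of_mem_closedBall (by
    simpa [Metric.mem_closedBall, dist_zero_right, show bump2.rIn = 2 from rfl] using hp)
  simp [wf, h1, vf]

-- energy conservation
lemma energy_const {a : ℝ} {x dx c : ℝ → ℝ}
    (hx : ∀ t, HasDerivAt x (c t * dx t) t)
    (hdx : ∀ t, HasDerivAt dx (c t * gg a (x t)) t) (t : ℝ) :
    (dx t) ^ 2 / 2 + Fa a (x t) = (dx 0) ^ 2 / 2 + Fa a (x 0) := by
  set e : ℝ → ℝ := fun t => (dx t) ^ 2 / 2 + Fa a (x t) with he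
  have hd : ∀ s, HasDerivAt e 0 s := by
    intro s
    have h1 : HasDerivAt (fun t => (dx t) ^ 2 / 2)
        ((2 * dx s ^ 1 * (c s * gg a (x s))) / 2) s := ((hdx s).pow 2).div_const 2
    have h2 : HasDerivAt (fun t => Fa a (x t))
        ((x s * (1 - x s) * (x s - a)) * (c s * dx s)) s :=
      (hasDerivAt_Fa a (x s)).comp s (hx s)
    have := h1.add h2
    refine this.congr_deriv ?_
    simp only [gg]; ring
  have hconst : ∀ u v : ℝ, e u = e v := by
    apply is_const_of_deriv_eq_zero
    · exact fun s => (hd s).differentiableAt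
    · exact fun s => (hd s).deriv
  exact hconst t 0


lemma IsAutSol.hdx' {a : ℝ} {x dx : ℝ → ℝ} (h : IsAutSol a x dx) (t : ℝ) :
    HasDerivAt dx (gg a (x t)) t := h.2 t

-- confinement lemma
lemma confine {a x₀ : ℝ} (h0 : 0 < a) (h1 : a < 1) (hx₀ : x₀ ∈ Set.Ioo a 1)
    (hF : Fa a x₀ < min 0 ((1 - 2 * a) / 12))
    {x dx : ℝ → ℝ} (hxc : Continuous x) (hx0 : x 0 = x₀)
    (hE : ∀ t, (dx t) ^ 2 / 2 + Fa a (x t) = Fa a x₀) (t : ℝ) :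
    (0 < x t ∧ x t < 1) ∧ |dx t| ≤ 2 := by
  have hE0 : Fa a x₀ < 0 := lt_of_lt_of_le hF (min_le_left _ _)
  have hE1 : Fa a x₀ < (1 - 2 * a) / 12 := lt_of_lt_of_le hF (min_le_right _ _)
  have hxt0 : 0 < x t := by
    by_contra hle
    push_neg at hle
    have h00 : (0 : ℝ) ∈ uIcc (x t) (x 0) := by
      rw [hx0, Set.mem_uIcc]
      exact Or.inl ⟨hle, by nlinarith [hx₀.1]⟩
    obtain ⟨s, _, hs⟩ := intermediate_value_uIcc (f := x) (a := t) (b := 0)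
      (hxc.continuousOn) h00
    have h2 := hE s
    rw [hs] at h2
    have h3 : Fa a 0 = 0 := by simp [Fa]
    nlinarith [sq_nonneg (dx s)]
  have hxt1 : x t < 1 := by
    by_contra hle
    push_neg at hle
    have h00 : (1 : ℝ) ∈ uIcc (x 0) (x t) := by
      rw [hx0, Set.mem_uIcc]
      exact Or.inl ⟨by nlinarith [hx₀.2], hle⟩
    obtain ⟨s, _, hs⟩ := intermediate_value_uIcc (f := x) (a := 0) (b := t)
      (hxc.continuousOn) h00
    have h2 := hE s
    rw [hs] at h2
    have h3 : Fa a 1 = (1 - 2 * a) / 12 := by simp only [Fa]; ring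
    nlinarith [sq_nonneg (dx s)]
  refine ⟨⟨hxt0, hxt1⟩, ?_⟩
  have hsq : (dx t) ^ 2 ≤ 2 ^ 2 := by
    have h2 := hE t
    simp only [Fa] at h2 hE0
    have bx : x t ^ 2 ≤ 1 := by nlinarith
    have b1 : x t ^ 4 ≤ 1 := by nlinarith [sq_nonneg (x t ^ 2)]
    have b2 : 0 ≤ (1 + a) * x t ^ 3 / 3 := by positivity
    have b3 : a * x t ^ 2 ≤ 1 := by nlinarith
    nlinarith
  calc |dx t| = Real.sqrt ((dx t) ^ 2) := (Real.sqrt_sq_eq_abs _).symm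
    _ ≤ Real.sqrt (2 ^ 2) := Real.sqrt_le_sqrt hsq
    _ = 2 := by rw [Real.sqrt_sq (by norm_num)]

-- a confined IsAutSol gives a wf-solution
lemma pair_sol {a : ℝ} {x dx : ℝ → ℝ} (h : IsAutSol a x dx)
    (hb : ∀ t, |x t| ≤ 2 ∧ |dx t| ≤ 2) (t : ℝ) :
    HasDerivAt (fun s => (x s, dx s)) (wf a (x t, dx t)) t := by
  have hnorm : ‖((x t, dx t) : ℝ × ℝ)‖ ≤ 2 := by
    rw [Prod.norm_def]
    exact max_le (by simpa [Real.norm_eq_abs] using (hb t).1)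
      (by simpa [Real.norm_eq_abs] using (hb t).2)
  rw [wf_eq a hnorm]
  exact (h.1 t).prodMk (by simpa [gg] using h.2 t)

-- uniqueness of confined solutions
lemma uniq_sol {a : ℝ} {x₁ dx₁ x₂ dx₂ : ℝ → ℝ}
    (h₁ : IsAutSol a x₁ dx₁) (h₂ : IsAutSol a x₂ dx₂)
    (hb₁ : ∀ t, |x₁ t| ≤ 2 ∧ |dx₁ t| ≤ 2) (hb₂ : ∀ t, |x₂ t| ≤ 2 ∧ |dx₂ t| ≤ 2)
    (t₀ : ℝ) (he : x₁ t₀ = x₂ t₀) (he' : dx₁ t₀ = dx₂ t₀) (t : ℝ) :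
    x₁ t = x₂ t ∧ dx₁ t = dx₂ t := by
  obtain ⟨L, hL⟩ := ContDiff.lipschitzWith_of_hasCompactSupport (hsupp_wf a)
    (contDiff_wf a) one_ne_zero
  have hmem : t ∈ Ioo (min t t₀ - 1) (max t t₀ + 1) :=
    ⟨by have := min_le_left t t₀; linarith, by have := le_max_left t t₀; linarith⟩
  have hmem0 : t₀ ∈ Ioo (min t t₀ - 1) (max t t₀ + 1) :=
    ⟨by have := min_le_right t t₀; linarith, by have := le_max_right t t₀; linarith⟩
  have key := ODE_solution_unique_of_mem_Ioo (v := fun _ => wf a) (s := fun _ => univ)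
    (fun _ _ => hL.lipschitzOnWith) hmem0
    (f := fun s => (x₁ s, dx₁ s)) (g := fun s => (x₂ s, dx₂ s))
    (fun s _ => ⟨pair_sol h₁ hb₁ s, trivial⟩)
    (fun s _ => ⟨pair_sol h₂ hb₂ s, trivial⟩)
    (Prod.ext he he')
  have := key hmem
  exact ⟨congrArg Prod.fst this, congrArg Prod.snd this⟩

-- time reflection
lemma reflect_sol {a : ℝ} {x dx : ℝ → ℝ} (h : IsAutSol a x dx) (c : ℝ) :
    IsAutSol a (fun t => x (2 * c - t)) (fun t => -dx (2 * c - t)) := by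
  have haff : ∀ t : ℝ, HasDerivAt (fun s : ℝ => 2 * c - s) (-1) t := by
    intro t
    simpa using (hasDerivAt_id t).const_sub (2 * c)
  constructor
  · intro t
    have := (h.1 (2 * c - t)).comp t (haff t)
    refine this.congr_deriv ?_
    ring
  · intro t
    have := ((h.2 (2 * c - t)).comp t (haff t)).neg
    refine this.congr_deriv ?_
    ring

lemma continuous_Fa (a : ℝ) : Continuous (Fa a) := by unfold Fa; fun_prop
lemma continuous_gg (a : ℝ) : Continuous (gg a) := by unfold gg; fun_prop

lemma linear_atBot {m : ℝ} (A : ℝ) (hm : 0 < m) :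
    Tendsto (fun t : ℝ => A - m * t) atTop atBot := by
  have h1 : Tendsto (fun t : ℝ => m * t) atTop atTop :=
    Tendsto.const_mul_atTop hm tendsto_id
  have h2 : Tendsto (fun t : ℝ => -(m * t)) atTop atBot := tendsto_neg_atBot_iff.mpr h1
  simpa [sub_eq_add_neg] using tendsto_atBot_add_const_left atTop A h2

lemma linear_atTop {m : ℝ} (A : ℝ) (hm : 0 < m) :
    Tendsto (fun t : ℝ => A + m * t) atTop atTop := by
  have h1 : Tendsto (fun t : ℝ => m * t) atTop atTop :=
    Tendsto.const_mul_atTop hm tendsto_id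
  exact tendsto_atTop_add_const_left atTop A h1

lemma exists_turning {a x₀ : ℝ} (h0 : 0 < a) (h1 : a < 1) (hx₀ : x₀ ∈ Set.Ioo a 1)
    (hF : Fa a x₀ < min 0 ((1 - 2 * a) / 12))
    {x dx : ℝ → ℝ} (hsol : IsAutSol a x dx) (hx0 : x 0 = x₀) (hdx0 : dx 0 = 0)
    (hE : ∀ t, (dx t) ^ 2 / 2 + Fa a (x t) = Fa a x₀)
    (hxp : ∀ t, 0 < x t) (_hx1 : ∀ t, x t < 1) :
    ∃ c, 0 < c ∧ dx c = 0 := by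
  have hxc : Continuous x := continuous_iff_continuousAt.mpr fun t => (hsol.1 t).continuousAt
  have hdxc : Continuous dx := continuous_iff_continuousAt.mpr fun t => (hsol.2 t).continuousAt
  by_contra hcon
  push_neg at hcon
  -- Step A : dx is negative on (0, ∞)
  have hgx0 : gg a x₀ < 0 := by
    simp only [gg]
    nlinarith [mul_pos (lt_trans h0 hx₀.1) (sub_pos.mpr hx₀.1), hx₀.2]
  have hslope : Tendsto (slope dx 0) (𝓝[≠] 0) (𝓝 (gg a x₀)) := by
    have := hasDerivAt_iff_tendsto_slope.mp (hsol.hdx' 0)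
    rwa [hx0] at this
  have hev : ∀ᶠ s in 𝓝[>] (0:ℝ), dx s < 0 := by
    have h2 : ∀ᶠ s in 𝓝[≠] (0:ℝ), slope dx 0 s < 0 := hslope.eventually_lt_const hgx0
    have h3 : 𝓝[>] (0:ℝ) ≤ 𝓝[≠] (0:ℝ) := nhdsWithin_mono 0 (fun s hs => ne_of_gt hs)
    filter_upwards [h3 h2, self_mem_nhdsWithin] with s hs hs'
    rw [slope_def_field, hdx0, sub_zero, sub_zero] at hs
    have hs'' : (0:ℝ) < s := hs'
    have := mul_neg_of_neg_of_pos hs hs''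
    rwa [div_mul_cancel₀ _ (ne_of_gt hs'')] at this
  have hneg : ∀ t, 0 < t → dx t < 0 := by
    intro t ht
    rcases lt_or_gt_of_ne (hcon t ht) with h | h
    · exact h
    · exfalso
      have hmem : Ioo (0:ℝ) t ∈ 𝓝[>] (0:ℝ) := Ioo_mem_nhdsGT_of_mem ⟨le_refl 0, ht⟩
      obtain ⟨s, hs1, hs2⟩ := (hev.and (eventually_of_mem hmem (fun s hs => hs))).exists
      obtain ⟨u, hu, hdxu⟩ := intermediate_value_Icc hs2.2.le hdxc.continuousOn
        (show (0:ℝ) ∈ Icc (dx s) (dx t) from ⟨hs1.le, h.le⟩)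
      exact hcon u (lt_of_lt_of_le hs2.1 hu.1) hdxu
  -- Step B : x is antitone on [0, ∞)
  have hanti : AntitoneOn x (Ici (0:ℝ)) := by
    apply antitoneOn_of_deriv_nonpos (convex_Ici 0) hxc.continuousOn
    · intro s _
      exact (hsol.1 s).differentiableAt.differentiableWithinAt
    · intro s hs
      rw [interior_Ici] at hs
      rw [(hsol.1 s).deriv]
      exact (hneg s hs).le
  -- Step C : x converges to some limit L
  set f : ℝ → ℝ := fun t => x (t ⊔ 0) with hfdef
  have hfanti : Antitone f := fun s t hst =>
    hanti (le_max_right s 0) (le_max_right t 0) (max_le_max hst le_rfl)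
  have hbdd : BddBelow (range f) := ⟨0, by rintro _ ⟨t, rfl⟩; exact (hxp _).le⟩
  have hftend : Tendsto f atTop (𝓝 (⨅ t, f t)) := tendsto_atTop_ciInf hfanti hbdd
  set L := ⨅ t, f t with hLdef
  have hxtend : Tendsto x atTop (𝓝 L) := by
    apply Tendsto.congr' _ hftend
    filter_upwards [eventually_ge_atTop (0:ℝ)] with t ht
    simp [hfdef, max_eq_left ht]
  -- Step D : the limit of the energy relation
  have hFtend : Tendsto (fun t => Fa a (x t)) atTop (𝓝 (Fa a L)) :=
    ((continuous_Fa a).continuousAt).tendsto.comp hxtend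
  have hsqtend : Tendsto (fun t => (dx t) ^ 2) atTop (𝓝 (2 * (Fa a x₀ - Fa a L))) := by
    have heq : (fun t => (dx t) ^ 2) = fun t => 2 * (Fa a x₀ - Fa a (x t)) := by
      funext t; have := hE t; linarith
    rw [heq]
    exact (tendsto_const_nhds.sub hFtend).const_mul 2
  set s0 := Real.sqrt (2 * (Fa a x₀ - Fa a L)) with hs0def
  have hdxtend : Tendsto dx atTop (𝓝 (-s0)) := by
    have h1 : Tendsto (fun t => -Real.sqrt ((dx t) ^ 2)) atTop (𝓝 (-s0)) :=
      ((Real.continuous_sqrt.tendsto _).comp hsqtend).neg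
    apply Tendsto.congr' _ h1
    filter_upwards [eventually_gt_atTop (0:ℝ)] with t ht
    rw [Real.sqrt_sq_eq_abs, abs_of_nonpos (hneg t ht).le, neg_neg]
  rcases (Real.sqrt_nonneg (2 * (Fa a x₀ - Fa a L))).eq_or_lt with hs | hs
  · -- s0 = 0 : the limit is an equilibrium with energy Fa a x₀, impossible
    have hs' : s0 = 0 := hs.symm
    have hdx0' : Tendsto dx atTop (𝓝 0) := by rw [← neg_zero, ← hs']; exact hdxtend
    have h2EL : Fa a x₀ ≤ Fa a L := by
      have h5 : 2 * (Fa a x₀ - Fa a L) ≤ 0 := Real.sqrt_eq_zero'.mp hs'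
      linarith
    have hLE : Fa a L ≤ Fa a x₀ := by
      have hge : (0:ℝ) ≤ 2 * (Fa a x₀ - Fa a L) :=
        ge_of_tendsto' hsqtend (fun t => sq_nonneg _)
      linarith
    have hFaL : Fa a L = Fa a x₀ := le_antisymm hLE h2EL
    have hggtend : Tendsto (fun t => gg a (x t)) atTop (𝓝 (gg a L)) :=
      (continuous_gg a).continuousAt.tendsto.comp hxtend
    have hgL : gg a L = 0 := by
      by_contra hg
      rcases lt_or_gt_of_ne hg with hc | hc
      · -- gg a L < 0
        set m := -(gg a L) / 2 with hmdef
        have hm0 : 0 < m := by simp only [hmdef]; linarith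
        have hev3 : ∀ᶠ t in atTop, gg a (x t) < -m :=
          hggtend.eventually_lt_const (by simp only [hmdef]; linarith)
        obtain ⟨t₃, ht₃⟩ := eventually_atTop.mp hev3
        have hh : ∀ u, HasDerivAt (fun t => dx t + m * t) (gg a (x u) + m) u := fun u =>
          (hsol.hdx' u).add (by simpa using (hasDerivAt_id u).const_mul m)
        have hanti3 : AntitoneOn (fun t => dx t + m * t) (Ici t₃) := by
          apply antitoneOn_of_deriv_nonpos (convex_Ici t₃)
            (continuous_iff_continuousAt.mpr fun u => (hh u).continuousAt).continuousOn
          · intro u _; exact (hh u).differentiableAt.differentiableWithinAt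
          · intro u hu
            rw [interior_Ici] at hu
            rw [(hh u).deriv]
            have := ht₃ u (le_of_lt hu)
            linarith
        have hub : ∀ᶠ t in atTop, dx t ≤ (dx t₃ + m * t₃) - m * t := by
          filter_upwards [eventually_ge_atTop t₃] with t ht
          have h6 : dx t + m * t ≤ dx t₃ + m * t₃ := hanti3 self_mem_Ici (mem_Ici.mpr ht) ht
          linarith
        have hlb : ∀ᶠ t in atTop, (-1:ℝ) < dx t :=
          hdx0'.eventually_const_lt (by norm_num)
        have hlin : ∀ᶠ t in atTop, (dx t₃ + m * t₃) - m * t < -1 :=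
          (linear_atBot (dx t₃ + m * t₃) hm0).eventually (eventually_lt_atBot (-1))
        obtain ⟨t, h1', h2', h3'⟩ := (hub.and (hlb.and hlin)).exists
        linarith [h1', h2', h3']
      · -- gg a L > 0
        set m := gg a L / 2 with hmdef
        have hm0 : 0 < m := by simp only [hmdef]; linarith
        have hev3 : ∀ᶠ t in atTop, m < gg a (x t) :=
          hggtend.eventually_const_lt (by simp only [hmdef]; linarith)
        obtain ⟨t₃', ht₃'⟩ := eventually_atTop.mp hev3
        set t₃ := t₃' ⊔ 0 with ht₃def
        have ht₃ : ∀ t ≥ t₃, m < gg a (x t) := fun t ht =>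
          ht₃' t (le_trans (le_max_left _ _) ht)
        have hh : ∀ u, HasDerivAt (fun t => dx t - m * t) (gg a (x u) - m) u := fun u =>
          (hsol.hdx' u).sub (by simpa using (hasDerivAt_id u).const_mul m)
        have hmono3 : MonotoneOn (fun t => dx t - m * t) (Ici t₃) := by
          apply monotoneOn_of_deriv_nonneg (convex_Ici t₃)
            (continuous_iff_continuousAt.mpr fun u => (hh u).continuousAt).continuousOn
          · intro u _; exact (hh u).differentiableAt.differentiableWithinAt
          · intro u hu
            rw [interior_Ici] at hu
            rw [(hh u).deriv]
            have := ht₃ u (le_of_lt hu)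
            linarith
        have hub : ∀ᶠ t in atTop, (dx t₃ - m * t₃) + m * t ≤ dx t := by
          filter_upwards [eventually_ge_atTop t₃] with t ht
          have h6 : dx t₃ - m * t₃ ≤ dx t - m * t := hmono3 self_mem_Ici (mem_Ici.mpr ht) ht
          linarith
        have hlin : ∀ᶠ t in atTop, (0:ℝ) < (dx t₃ - m * t₃) + m * t :=
          (linear_atTop (dx t₃ - m * t₃) hm0).eventually (eventually_gt_atTop 0)
        have hneg' : ∀ᶠ t in atTop, dx t < 0 := by
          filter_upwards [eventually_gt_atTop (0:ℝ)] with t ht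
          exact hneg t ht
        obtain ⟨t, h1', h2', h3'⟩ := (hub.and (hlin.and hneg')).exists
        linarith [h1', h2', h3']
    -- L is a rest point : L = 0, 1 or a, all impossible
    have hL3 : L = 0 ∨ L = 1 ∨ L = a := by
      have h4 := hgL
      simp only [gg, mul_eq_zero] at h4
      rcases h4 with (h | h) | h
      · exact Or.inl h
      · exact Or.inr (Or.inl (by linarith))
      · exact Or.inr (Or.inr (by linarith))
    have hE0 : Fa a x₀ < 0 := lt_of_lt_of_le hF (min_le_left _ _)
    have hE1 : Fa a x₀ < (1 - 2 * a) / 12 := lt_of_lt_of_le hF (min_le_right _ _)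
    rcases hL3 with h | h | h
    · rw [h] at hFaL
      have : Fa a 0 = 0 := by simp [Fa]
      linarith
    · rw [h] at hFaL
      have : Fa a 1 = (1 - 2 * a) / 12 := by simp only [Fa]; ring
      linarith
    · rw [h] at hFaL
      have hmono : StrictMonoOn (Fa a) (Icc a 1) := by
        apply strictMonoOn_of_deriv_pos (convex_Icc a 1) (continuous_Fa a).continuousOn
        intro y hy
        rw [interior_Icc] at hy
        rw [(hasDerivAt_Fa a y).deriv]
        exact mul_pos (mul_pos (lt_trans h0 hy.1) (sub_pos.mpr hy.2)) (sub_pos.mpr hy.1)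
      have := hmono (left_mem_Icc.mpr h1.le) (mem_Icc.mpr ⟨hx₀.1.le, hx₀.2.le⟩) hx₀.1
      linarith
  · -- s0 > 0 : x would go to -∞
    have hev2 : ∀ᶠ t in atTop, dx t < -s0 / 2 :=
      hdxtend.eventually_lt_const (by linarith)
    obtain ⟨t₁, ht₁⟩ := eventually_atTop.mp hev2
    have hh : ∀ u, HasDerivAt (fun t => x t + s0 / 2 * t) (dx u + s0 / 2) u := fun u =>
      (hsol.1 u).add (by simpa using (hasDerivAt_id u).const_mul (s0 / 2))
    have hanti2 : AntitoneOn (fun t => x t + s0 / 2 * t) (Ici t₁) := by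
      apply antitoneOn_of_deriv_nonpos (convex_Ici t₁)
        (continuous_iff_continuousAt.mpr fun u => (hh u).continuousAt).continuousOn
      · intro u _; exact (hh u).differentiableAt.differentiableWithinAt
      · intro u hu
        rw [interior_Ici] at hu
        rw [(hh u).deriv]
        have := ht₁ u (le_of_lt hu)
        linarith
    have hub : ∀ᶠ t in atTop, x t ≤ (x t₁ + s0 / 2 * t₁) - s0 / 2 * t := by
      filter_upwards [eventually_ge_atTop t₁] with t ht
      have := hanti2 (self_mem_Ici) (mem_Ici.mpr ht) ht
      linarith
    have hlin : ∀ᶠ t in atTop, (x t₁ + s0 / 2 * t₁) - s0 / 2 * t < 0 :=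
      (linear_atBot (x t₁ + s0 / 2 * t₁) (by linarith)).eventually (eventually_lt_atBot 0)
    obtain ⟨t, h1', h2'⟩ := (hub.and hlin).exists
    linarith [hxp t]

lemma fst' {γ : ℝ → ℝ × ℝ} {p : ℝ × ℝ} {t : ℝ} (h : HasDerivAt γ p t) :
    HasDerivAt (fun s => (γ s).1) p.1 t := by
  have := (h.hasFDerivAt.fst).hasDerivAt
  simpa using this

lemma snd' {γ : ℝ → ℝ × ℝ} {p : ℝ × ℝ} {t : ℝ} (h : HasDerivAt γ p t) :
    HasDerivAt (fun s => (γ s).2) p.2 t := by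
  have := (h.hasFDerivAt.snd).hasDerivAt
  simpa using this

theorem stmt_17 (a x₀ : ℝ) (h0 : 0 < a) (h1 : a < 1)
    (hx₀ : x₀ ∈ Set.Ioo a 1) (hF : Fa a x₀ < min 0 ((1 - 2 * a) / 12)) :
    -- the solution with x(0) = x₀, x'(0) = 0 exists ...
    (∃ x dx : ℝ → ℝ, IsAutSol a x dx ∧ x 0 = x₀ ∧ dx 0 = 0) ∧
    -- ... and it is a nonconstant periodic solution
    (∀ x dx : ℝ → ℝ, IsAutSol a x dx → x 0 = x₀ → dx 0 = 0 →
      (∃ T : ℝ, 0 < T ∧ Function.Periodic x T) ∧ (∃ t₁ t₂ : ℝ, x t₁ ≠ x t₂)) := by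
  have existence : ∃ x dx : ℝ → ℝ, IsAutSol a x dx ∧ x 0 = x₀ ∧ dx 0 = 0 := by
    obtain ⟨γ, hγ0, hγ⟩ := global_existence (contDiff_wf a) (hsupp_wf a) ((x₀, (0:ℝ)))
    set x : ℝ → ℝ := fun t => (γ t).1 with hxdef
    set dx : ℝ → ℝ := fun t => (γ t).2 with hdxdef
    have hx0 : x 0 = x₀ := by show (γ 0).1 = x₀; rw [hγ0]
    have hdx0 : dx 0 = 0 := by show (γ 0).2 = 0; rw [hγ0]
    have hx : ∀ t, HasDerivAt x (bump2 (γ t) * dx t) t := by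
      intro t
      have h := fst' (hγ t)
      convert h using 1
      rfl
    have hdx : ∀ t, HasDerivAt dx (bump2 (γ t) * gg a (x t)) t := by
      intro t
      have h := snd' (hγ t)
      convert h using 1
      rfl
    have hE : ∀ t, (dx t) ^ 2 / 2 + Fa a (x t) = Fa a x₀ := by
      intro t
      have := energy_const (a := a) (c := fun t => bump2 (γ t)) hx hdx t
      rw [hx0, hdx0] at this
      simpa using this
    have hxc : Continuous x := continuous_iff_continuousAt.mpr fun t => (hx t).continuousAt
    have hconf := fun t => confine h0 h1 hx₀ hF hxc hx0 hE t
    have hone : ∀ t, bump2 (γ t) = 1 := by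
      intro t
      apply bump2.one_of_mem_closedBall
      rw [Metric.mem_closedBall, dist_zero_right, Prod.norm_def,
        show bump2.rIn = 2 from rfl]
      apply max_le
      · rw [Real.norm_eq_abs]
        exact abs_le.mpr ⟨by linarith [(hconf t).1.1], by linarith [(hconf t).1.2]⟩
      · rw [Real.norm_eq_abs]
        exact (hconf t).2
    refine ⟨x, dx, ⟨fun t => ?_, fun t => ?_⟩, hx0, hdx0⟩
    · have := hx t
      rwa [hone t, one_mul] at this
    · have := hdx t
      rw [hone t, one_mul] at this
      simpa [gg] using this
  refine ⟨existence, ?_⟩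
  intro x dx hsol hx0 hdx0
  have hsol' : IsAutSol a x dx := hsol
  have hE : ∀ t, (dx t) ^ 2 / 2 + Fa a (x t) = Fa a x₀ := by
    intro t
    have hx' : ∀ s, HasDerivAt x ((fun _ => (1:ℝ)) s * dx s) s := fun s => by
      simpa using hsol.1 s
    have hdx' : ∀ s, HasDerivAt dx ((fun _ => (1:ℝ)) s * gg a (x s)) s := fun s => by
      simpa [gg] using hsol.2 s
    have := energy_const hx' hdx' t
    rw [hx0, hdx0] at this
    simpa using this
  have hxc : Continuous x := continuous_iff_continuousAt.mpr fun t => (hsol.1 t).continuousAt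
  have hconf := fun t => confine h0 h1 hx₀ hF hxc hx0 hE t
  have hb : ∀ t, |x t| ≤ 2 ∧ |dx t| ≤ 2 := fun t =>
    ⟨abs_le.mpr ⟨by linarith [(hconf t).1.1], by linarith [(hconf t).1.2]⟩, (hconf t).2⟩
  have hrefl : ∀ c, dx c = 0 → ∀ t, x (2 * c - t) = x t := by
    intro c hc t
    have h₂ := reflect_sol hsol c
    have hb₂ : ∀ t, |x (2 * c - t)| ≤ 2 ∧ |(-dx (2 * c - t))| ≤ 2 := fun t => by
      simpa [abs_neg] using hb (2 * c - t)
    have he1 : x (2 * c - c) = x c := congrArg x (by ring)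
    have he2 : -dx (2 * c - c) = dx c := by
      rw [show 2 * c - c = c by ring, hc, neg_zero]
    have key := uniq_sol h₂ hsol hb₂ hb c he1 he2 t
    exact key.1
  obtain ⟨c, hcpos, hcdx⟩ := exists_turning h0 h1 hx₀ hF hsol hx0 hdx0 hE
    (fun t => (hconf t).1.1) (fun t => (hconf t).1.2)
  constructor
  · refine ⟨2 * c, by linarith, ?_⟩
    intro t
    have h1' := hrefl c hcdx (-t)
    have h2' := hrefl 0 hdx0 t
    calc x (t + 2 * c) = x (2 * c - (-t)) := congrArg x (by ring)
      _ = x (-t) := h1'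
      _ = x (2 * 0 - t) := congrArg x (by ring)
      _ = x t := h2'
  · by_contra hcon
    push_neg at hcon
    have hxconst : ∀ t, x t = x₀ := fun t => by rw [← hx0]; exact hcon t 0
    have hdxzero : ∀ t, dx t = 0 := by
      intro t
      have h1' : HasDerivAt x 0 t := by
        have hxeq : x = fun _ => x₀ := funext hxconst
        rw [hxeq]
        exact hasDerivAt_const t x₀
      exact (hsol.1 t).unique h1'
    have hzero : x₀ * (x₀ - 1) * (x₀ - a) = 0 := by
      have hdc : HasDerivAt dx 0 0 := by
        have hdxeq : dx = fun _ => (0:ℝ) := funext hdxzero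
        rw [hdxeq]
        exact hasDerivAt_const 0 0
      have := (hsol.2 0).unique hdc
      rwa [hx0] at this
    nlinarith [mul_pos (lt_trans h0 hx₀.1) (sub_pos.mpr hx₀.1), hx₀.2]
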